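/- For all non-negative integers x, y and z, the Grundy value of the position (x,y,z) in modified 3-dimensional Ryūō Nim is 𝒢(x,y,z) = mod(x+y+z, 3) + 3·(⌊x/3⌋ ⊕ ⌊y/3⌋ ⊕ ⌊z/3⌋). -/

import Mathlib

/-- The minimum excluded value of a set of natural numbers. -/
noncomputable def mex (S : Set ℕ) : ℕ := sInf {n : ℕ | n ∉ S}

/-- Moves of modified 3-dimensional Ryūō Nim: remove any positive number of tokens
from a single heap, or one token from each of two heaps (removing one token from
all three heaps is not allowed). -/
def move3' (pos : ℕ × ℕ × ℕ) : Set (ℕ × ℕ × ℕ) :=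
  {q | ∃ u < pos.1, q = (u, pos.2.1, pos.2.2)} ∪
  {q | ∃ v < pos.2.1, q = (pos.1, v, pos.2.2)} ∪
  {q | ∃ w < pos.2.2, q = (pos.1, pos.2.1, w)} ∪
  {q | 1 ≤ pos.1 ∧ 1 ≤ pos.2.1 ∧ q = (pos.1 - 1, pos.2.1 - 1, pos.2.2)} ∪
  {q | 1 ≤ pos.1 ∧ 1 ≤ pos.2.2 ∧ q = (pos.1 - 1, pos.2.1, pos.2.2 - 1)} ∪
  {q | 1 ≤ pos.2.1 ∧ 1 ≤ pos.2.2 ∧ q = (pos.1, pos.2.1 - 1, pos.2.2 - 1)}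

private lemma mex_eq_of {S : Set ℕ} {n : ℕ} (h1 : n ∉ S) (h2 : ∀ k < n, k ∈ S) :
    mex S = n := by
  refine le_antisymm (Nat.sInf_le h1) ?_
  by_contra h
  push_neg at h
  exact (Nat.sInf_mem (⟨n, h1⟩ : Set.Nonempty {m : ℕ | m ∉ S})) (h2 _ h)

/-- The conjectured Grundy value. -/
private def fval (x y z : ℕ) : ℕ :=
  (x + y + z) % 3 + 3 * (x / 3 ^^^ y / 3 ^^^ z / 3)

private lemma xlc (a b c : ℕ) : a ^^^ (b ^^^ c) = b ^^^ (a ^^^ c) := by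
  rw [← Nat.xor_assoc, Nat.xor_comm a, Nat.xor_assoc]

private lemma xor_right_cancel' {a b w : ℕ} (h : a ^^^ w = b ^^^ w) : a = b := by
  have := congrArg (· ^^^ w) h
  simpa [Nat.xor_assoc] using this

private lemma xor_left_cancel' {a b w : ℕ} (h : w ^^^ a = w ^^^ b) : a = b := by
  have := congrArg (w ^^^ ·) h
  simpa [← Nat.xor_assoc] using this

/-- Nim-style lemma: if t is smaller than the xor, one coordinate can be decreased
to reach xor value t. -/
private lemma xor3_lt {a b c t : ℕ} (h : t < a ^^^ b ^^^ c) :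
    (∃ a' < a, a' ^^^ b ^^^ c = t) ∨ (∃ b' < b, a ^^^ b' ^^^ c = t) ∨
      (∃ c' < c, a ^^^ b ^^^ c' = t) := by
  rcases Nat.lt_xor_cases h with h1 | h2
  · rcases Nat.lt_xor_cases h1 with h3 | h4
    · exact Or.inl ⟨t ^^^ c ^^^ b, h3, by
        simp [Nat.xor_assoc, Nat.xor_comm, xlc, Nat.xor_xor_cancel_left, Nat.xor_self,
          Nat.xor_zero]⟩
    · exact Or.inr (Or.inl ⟨t ^^^ c ^^^ a, h4, by
        simp [Nat.xor_assoc, Nat.xor_comm, xlc, Nat.xor_xor_cancel_left, Nat.xor_self,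
          Nat.xor_zero]⟩)
  · exact Or.inr (Or.inr ⟨t ^^^ (a ^^^ b), h2, by
      simp [Nat.xor_assoc, Nat.xor_comm, xlc, Nat.xor_xor_cancel_left, Nat.xor_self,
        Nat.xor_zero]⟩)


private lemma mem1 {x y z u : ℕ} (h : u < x) : ((u, y, z) : ℕ × ℕ × ℕ) ∈ move3' (x, y, z) :=
  Or.inl (Or.inl (Or.inl (Or.inl (Or.inl ⟨u, h, rfl⟩))))

private lemma mem2 {x y z v : ℕ} (h : v < y) : ((x, v, z) : ℕ × ℕ × ℕ) ∈ move3' (x, y, z) :=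
  Or.inl (Or.inl (Or.inl (Or.inl (Or.inr ⟨v, h, rfl⟩))))

private lemma mem3 {x y z w : ℕ} (h : w < z) : ((x, y, w) : ℕ × ℕ × ℕ) ∈ move3' (x, y, z) :=
  Or.inl (Or.inl (Or.inl (Or.inr ⟨w, h, rfl⟩)))

private lemma mem4 {x y z : ℕ} (hx : 1 ≤ x) (hy : 1 ≤ y) :
    ((x - 1, y - 1, z) : ℕ × ℕ × ℕ) ∈ move3' (x, y, z) :=
  Or.inl (Or.inl (Or.inr ⟨hx, hy, rfl⟩))

private lemma mem5 {x y z : ℕ} (hx : 1 ≤ x) (hz : 1 ≤ z) :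
    ((x - 1, y, z - 1) : ℕ × ℕ × ℕ) ∈ move3' (x, y, z) :=
  Or.inl (Or.inr ⟨hx, hz, rfl⟩)

private lemma mem6 {x y z : ℕ} (hy : 1 ≤ y) (hz : 1 ≤ z) :
    ((x, y - 1, z - 1) : ℕ × ℕ × ℕ) ∈ move3' (x, y, z) :=
  Or.inr ⟨hy, hz, rfl⟩

/-- No move preserves the conjectured Grundy value. -/
private lemma move_ne {x y z : ℕ} {q : ℕ × ℕ × ℕ} (hq : q ∈ move3' (x, y, z)) :
    fval q.1 q.2.1 q.2.2 ≠ fval x y z := by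
  simp only [move3', Set.mem_union, Set.mem_setOf_eq] at hq
  rcases hq with ((((⟨u, hu, rfl⟩ | ⟨v, hv, rfl⟩) | ⟨w, hw, rfl⟩) | ⟨hx, hy, rfl⟩) |
    ⟨hx, hz, rfl⟩) | ⟨hy, hz, rfl⟩ <;> intro he <;> simp only [fval] at he
  · -- q = (u, y, z), u < x
    have hA : u / 3 ^^^ y / 3 ^^^ z / 3 = x / 3 ^^^ y / 3 ^^^ z / 3 := by omega
    have : u / 3 = x / 3 :=
      xor_right_cancel' (xor_right_cancel' (by rwa [] at hA))
    omega
  · have hA : x / 3 ^^^ v / 3 ^^^ z / 3 = x / 3 ^^^ y / 3 ^^^ z / 3 := by omega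
    have : v / 3 = y / 3 := xor_left_cancel' (xor_right_cancel' hA)
    omega
  · have hA : x / 3 ^^^ y / 3 ^^^ w / 3 = x / 3 ^^^ y / 3 ^^^ z / 3 := by omega
    have : w / 3 = z / 3 := xor_left_cancel' hA
    omega
  · omega
  · omega
  · omega

/-- Every value below the conjectured Grundy value is reachable. -/
private lemma reach {x y z k : ℕ} (hk : k < fval x y z) :
    ∃ q ∈ move3' (x, y, z), fval q.1 q.2.1 q.2.2 = k := by
  by_cases ht : k / 3 = x / 3 ^^^ y / 3 ^^^ z / 3
  · rw [fval, ← ht] at hk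
    have hcase : k % 3 + 1 = (x + y + z) % 3 ∨ k % 3 + 2 = (x + y + z) % 3 := by omega
    rcases hcase with h1 | h2
    · have hor : 1 ≤ x % 3 ∨ 1 ≤ y % 3 ∨ 1 ≤ z % 3 := by omega
      rcases hor with hx | hy | hz
      · refine ⟨(x - 1, y, z),
          mem1 (show x - 1 < x by omega), ?_⟩
        show (x - 1 + y + z) % 3 + 3 * ((x - 1) / 3 ^^^ y / 3 ^^^ z / 3) = k
        have h3 : (x - 1) / 3 = x / 3 := by omega
        rw [h3, ← ht]; omega
      · refine ⟨(x, y - 1, z),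
          mem2 (show y - 1 < y by omega), ?_⟩
        show (x + (y - 1) + z) % 3 + 3 * (x / 3 ^^^ (y - 1) / 3 ^^^ z / 3) = k
        have h3 : (y - 1) / 3 = y / 3 := by omega
        rw [h3, ← ht]; omega
      · refine ⟨(x, y, z - 1),
          mem3 (show z - 1 < z by omega), ?_⟩
        show (x + y + (z - 1)) % 3 + 3 * (x / 3 ^^^ y / 3 ^^^ (z - 1) / 3) = k
        have h3 : (z - 1) / 3 = z / 3 := by omega
        rw [h3, ← ht]; omega
    · have hor : x % 3 = 2 ∨ y % 3 = 2 ∨ z % 3 = 2 ∨ (x % 3 = 1 ∧ y % 3 = 1) ∨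
          (x % 3 = 1 ∧ z % 3 = 1) ∨ (y % 3 = 1 ∧ z % 3 = 1) := by omega
      rcases hor with hx | hy | hz | ⟨hx, hy⟩ | ⟨hx, hz⟩ | ⟨hy, hz⟩
      · refine ⟨(x - 2, y, z),
          mem1 (show x - 2 < x by omega), ?_⟩
        show (x - 2 + y + z) % 3 + 3 * ((x - 2) / 3 ^^^ y / 3 ^^^ z / 3) = k
        have h3 : (x - 2) / 3 = x / 3 := by omega
        rw [h3, ← ht]; omega
      · refine ⟨(x, y - 2, z),
          mem2 (show y - 2 < y by omega), ?_⟩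
        show (x + (y - 2) + z) % 3 + 3 * (x / 3 ^^^ (y - 2) / 3 ^^^ z / 3) = k
        have h3 : (y - 2) / 3 = y / 3 := by omega
        rw [h3, ← ht]; omega
      · refine ⟨(x, y, z - 2),
          mem3 (show z - 2 < z by omega), ?_⟩
        show (x + y + (z - 2)) % 3 + 3 * (x / 3 ^^^ y / 3 ^^^ (z - 2) / 3) = k
        have h3 : (z - 2) / 3 = z / 3 := by omega
        rw [h3, ← ht]; omega
      · refine ⟨(x - 1, y - 1, z),
          mem4 (by omega) (by omega), ?_⟩
        show (x - 1 + (y - 1) + z) % 3 + 3 * ((x - 1) / 3 ^^^ (y - 1) / 3 ^^^ z / 3) = k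
        have h3 : (x - 1) / 3 = x / 3 := by omega
        have h4 : (y - 1) / 3 = y / 3 := by omega
        rw [h3, h4, ← ht]; omega
      · refine ⟨(x - 1, y, z - 1),
          mem5 (by omega) (by omega), ?_⟩
        show (x - 1 + y + (z - 1)) % 3 + 3 * ((x - 1) / 3 ^^^ y / 3 ^^^ (z - 1) / 3) = k
        have h3 : (x - 1) / 3 = x / 3 := by omega
        have h4 : (z - 1) / 3 = z / 3 := by omega
        rw [h3, h4, ← ht]; omega
      · refine ⟨(x, y - 1, z - 1),
          mem6 (by omega) (by omega), ?_⟩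
        show (x + (y - 1) + (z - 1)) % 3 + 3 * (x / 3 ^^^ (y - 1) / 3 ^^^ (z - 1) / 3) = k
        have h3 : (y - 1) / 3 = y / 3 := by omega
        have h4 : (z - 1) / 3 = z / 3 := by omega
        rw [h3, h4, ← ht]; omega
  · have hlt : k / 3 < x / 3 ^^^ y / 3 ^^^ z / 3 := by
      rw [fval] at hk; omega
    obtain ⟨a', ha', hxa⟩ | ⟨b', hb', hxb⟩ | ⟨c', hc', hxc⟩ := xor3_lt hlt
    · refine ⟨(3 * a' + (k + 2 * (y + z)) % 3, y, z),
        mem1 (show _ < x by omega), ?_⟩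
      show (3 * a' + (k + 2 * (y + z)) % 3 + y + z) % 3 +
        3 * ((3 * a' + (k + 2 * (y + z)) % 3) / 3 ^^^ y / 3 ^^^ z / 3) = k
      have h1 : (3 * a' + (k + 2 * (y + z)) % 3) / 3 = a' := by omega
      rw [h1, hxa]; omega
    · refine ⟨(x, 3 * b' + (k + 2 * (x + z)) % 3, z),
        mem2 (show _ < y by omega), ?_⟩
      show (x + (3 * b' + (k + 2 * (x + z)) % 3) + z) % 3 +
        3 * (x / 3 ^^^ (3 * b' + (k + 2 * (x + z)) % 3) / 3 ^^^ z / 3) = k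
      have h1 : (3 * b' + (k + 2 * (x + z)) % 3) / 3 = b' := by omega
      rw [h1, hxb]; omega
    · refine ⟨(x, y, 3 * c' + (k + 2 * (x + y)) % 3),
        mem3 (show _ < z by omega), ?_⟩
      show (x + y + (3 * c' + (k + 2 * (x + y)) % 3)) % 3 +
        3 * (x / 3 ^^^ y / 3 ^^^ (3 * c' + (k + 2 * (x + y)) % 3) / 3) = k
      have h1 : (3 * c' + (k + 2 * (x + y)) % 3) / 3 = c' := by omega
      rw [h1, hxc]; omega

theorem stmt_16 (G : ℕ × ℕ × ℕ → ℕ)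
    (hG : ∀ pos : ℕ × ℕ × ℕ, G pos = mex (G '' move3' pos)) :
    ∀ x y z : ℕ, G (x, y, z) =
      (x + y + z) % 3 + 3 * ((x / 3) ^^^ (y / 3) ^^^ (z / 3)) := by
  suffices key : ∀ n x y z, x + y + z = n → G (x, y, z) = fval x y z by
    intro x y z; exact key (x + y + z) x y z rfl
  intro n
  induction n using Nat.strong_induction_on with
  | _ n ih =>
    intro x y z hn
    have hsmall : ∀ q ∈ move3' (x, y, z), G q = fval q.1 q.2.1 q.2.2 := by
      intro q hq
      simp only [move3', Set.mem_union, Set.mem_setOf_eq] at hq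
      rcases hq with ((((⟨u, hu, rfl⟩ | ⟨v, hv, rfl⟩) | ⟨w, hw, rfl⟩) | ⟨hx, hy, rfl⟩) |
        ⟨hx, hz, rfl⟩) | ⟨hy, hz, rfl⟩
      · exact ih (u + y + z) (by omega) u y z rfl
      · exact ih (x + v + z) (by omega) x v z rfl
      · exact ih (x + y + w) (by omega) x y w rfl
      · exact ih (x - 1 + (y - 1) + z) (by omega) (x - 1) (y - 1) z rfl
      · exact ih (x - 1 + y + (z - 1)) (by omega) (x - 1) y (z - 1) rfl
      · exact ih (x + (y - 1) + (z - 1)) (by omega) x (y - 1) (z - 1) rfl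
    rw [hG]
    refine mex_eq_of ?_ ?_
    · rintro ⟨q, hq, hq2⟩
      rw [hsmall q hq] at hq2
      exact move_ne hq hq2
    · intro m hm
      obtain ⟨q, hq, hfq⟩ := reach hm
      exact ⟨q, hq, by rw [hsmall q hq, hfq]⟩
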